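/- Θ_K((−3 + i√3)/6) = 0, i.e. the two-dimensional theta series ∑_{(m,n)∈ℤ×ℤ} exp(2πi(m²+n²−mn)·(−3+i√3)/6) vanishes. -/

import Mathlib

open Complex

/-- The theta function of `ℚ(√−3)`:
`Θ_K(z) = ∑_{(m,n) ∈ ℤ×ℤ} exp(2πi(m² + n² − mn)z)`. -/
noncomputable def ThetaK (z : ℂ) : ℂ :=
  ∑' p : ℤ × ℤ, Complex.exp (2 * Real.pi * Complex.I *
    ((p.1 : ℂ) ^ 2 + (p.2 : ℂ) ^ 2 - (p.1 : ℂ) * (p.2 : ℂ)) * z)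

namespace ThetaKAux

open Real in
noncomputable def t1 : ℂ := Complex.I * ((Real.sqrt 3)⁻¹ : ℝ)

noncomputable def t3 : ℂ := Complex.I * (Real.sqrt 3 : ℝ)

lemma sqrt3_ne : ((Real.sqrt 3 : ℝ) : ℂ) ≠ 0 := by
  norm_cast
  positivity

lemma sq3 : ((Real.sqrt 3 : ℝ) : ℂ) * ((Real.sqrt 3 : ℝ) : ℂ) = 3 := by
  norm_cast
  exact Real.mul_self_sqrt (by norm_num)

lemma ht1_im : 0 < t1.im := by
  simp [t1]

lemma ht3_im : 0 < t3.im := by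
  simp [t3]

lemma ht3_ne : t3 ≠ 0 := by
  simp [t3, Complex.ext_iff]

lemma ht3_eq : t3 = 3 * t1 := by
  rw [t1, t3]
  push_cast
  field_simp
  linear_combination sq3

lemma hz0 : ((-3 + Complex.I * Real.sqrt 3) / 6 : ℂ) = (t1 - 1) / 2 := by
  rw [t1]
  push_cast
  field_simp
  linear_combination 2 * Complex.I * sq3

lemma ht1t3 : -1 / t3 = t1 := by
  rw [t1, t3]
  push_cast
  field_simp
  linear_combination (-1 : ℂ) * Complex.I_sq

/-- the summand of `ThetaK` at our point. -/
noncomputable def f (p : ℤ × ℤ) : ℂ :=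
  Complex.exp (2 * Real.pi * Complex.I *
    ((p.1 : ℂ) ^ 2 + (p.2 : ℂ) ^ 2 - (p.1 : ℂ) * (p.2 : ℂ)) *
    ((-3 + Complex.I * Real.sqrt 3) / 6))

lemma exp_eq_of_int (a b : ℂ) (d : ℤ) (h : a = b + d * (2 * Real.pi * Complex.I)) :
    Complex.exp a = Complex.exp b := by
  rw [h, Complex.exp_add, Complex.exp_int_mul_two_pi_mul_I, mul_one]

lemma term_even (j k : ℤ) :
    f (j + k, k - j) = jacobiTheta₂_term j (1/2) t3 * jacobiTheta₂_term k (1/2) t1 := by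
  obtain ⟨x, hx⟩ := Int.even_mul_succ_self j
  obtain ⟨y, hy⟩ := Int.even_mul_succ_self k
  rw [f, jacobiTheta₂_term, jacobiTheta₂_term, ← Complex.exp_add]
  refine exp_eq_of_int _ _ (-(x + j^2 + y)) ?_
  have hx' : (j : ℂ) * (j + 1) = x + x := by exact_mod_cast congrArg (Int.cast : ℤ → ℂ) hx
  have hy' : (k : ℂ) * (k + 1) = y + y := by exact_mod_cast congrArg (Int.cast : ℤ → ℂ) hy
  rw [hz0, ht3_eq]
  push_cast
  linear_combination (-(Real.pi : ℂ) * Complex.I) * hx' + (-(Real.pi : ℂ) * Complex.I) * hy'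

lemma term_odd (a b : ℤ) :
    f (a + b + 1, b - a) =
      (-(Complex.exp (Real.pi * Complex.I * t3 / 4) * jacobiTheta₂_term a (t3/2) t3)) *
      (Complex.exp (Real.pi * Complex.I * t1 / 4) * jacobiTheta₂_term b (t1/2) t1) := by
  obtain ⟨x, hx⟩ := Int.even_mul_succ_self a
  obtain ⟨y, hy⟩ := Int.even_mul_succ_self b
  have hx' : (a : ℂ) * (a + 1) = x + x := by exact_mod_cast congrArg (Int.cast : ℤ → ℂ) hx
  have hy' : (b : ℂ) * (b + 1) = y + y := by exact_mod_cast congrArg (Int.cast : ℤ → ℂ) hy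
  have hrhs : (-(Complex.exp (Real.pi * Complex.I * t3 / 4) * jacobiTheta₂_term a (t3/2) t3)) *
      (Complex.exp (Real.pi * Complex.I * t1 / 4) * jacobiTheta₂_term b (t1/2) t1) =
      Complex.exp (Real.pi * Complex.I + Real.pi * Complex.I * t3 / 4 +
        (2 * Real.pi * Complex.I * a * (t3/2) + Real.pi * Complex.I * a ^ 2 * t3) +
        Real.pi * Complex.I * t1 / 4 +
        (2 * Real.pi * Complex.I * b * (t1/2) + Real.pi * Complex.I * b ^ 2 * t1)) := by
    rw [jacobiTheta₂_term, jacobiTheta₂_term]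
    simp only [Complex.exp_add, Complex.exp_pi_mul_I]
    ring
  rw [f, hrhs]
  refine exp_eq_of_int _ _ (-(3 * x + y + 1)) ?_
  rw [hz0, ht3_eq]
  push_cast
  linear_combination (-3 * (Real.pi : ℂ) * Complex.I) * hx' + (-(Real.pi : ℂ) * Complex.I) * hy'

end ThetaKAux

namespace ThetaKAux

/-- The set of lattice points with even coordinate sum. -/
def S : Set (ℤ × ℤ) := {p | (p.1 + p.2) % 2 = 0}

def e1 : ℤ × ℤ ≃ S where
  toFun p := ⟨(p.1 + p.2, p.2 - p.1), by show _ % 2 = 0; omega⟩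
  invFun q := ((q.1.1 - q.1.2) / 2, (q.1.1 + q.1.2) / 2)
  left_inv p := by
    ext <;> simp <;> omega
  right_inv q := by
    obtain ⟨⟨m, n⟩, h⟩ := q
    have h' : (m + n) % 2 = 0 := h
    ext <;> simp <;> omega

def e2 : ℤ × ℤ ≃ ↥(Sᶜ) where
  toFun p := ⟨(p.1 + p.2 + 1, p.2 - p.1), by
    show ¬ (_ % 2 = 0); omega⟩
  invFun q := ((q.1.1 - q.1.2 - 1) / 2, (q.1.1 + q.1.2 - 1) / 2)
  left_inv p := by
    ext <;> simp <;> omega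
  right_inv q := by
    obtain ⟨⟨m, n⟩, h⟩ := q
    have h' : ¬ ((m + n) % 2 = 0) := h
    ext <;> simp <;> omega

lemma norm_summable (z τ : ℂ) (hτ : 0 < τ.im) :
    Summable fun n : ℤ => ‖jacobiTheta₂_term n z τ‖ :=
  summable_norm_iff.2 ((summable_jacobiTheta₂_term_iff z τ).2 hτ)

lemma hasSum_even :
    HasSum (f ∘ (↑) : S → ℂ) (jacobiTheta₂ (1/2) t3 * jacobiTheta₂ (1/2) t1) := by
  have s3 := norm_summable (1/2) t3 ht3_im
  have s1 := norm_summable (1/2) t1 ht1_im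
  have h := (summable_mul_of_summable_norm s3 s1).hasSum
  rw [← tsum_mul_tsum_of_summable_norm s3 s1] at h
  have h' : HasSum (fun p : ℤ × ℤ =>
      jacobiTheta₂_term p.1 (1/2) t3 * jacobiTheta₂_term p.2 (1/2) t1)
      (jacobiTheta₂ (1/2) t3 * jacobiTheta₂ (1/2) t1) := h
  rw [← Equiv.hasSum_iff e1]
  have : ((f ∘ (↑)) ∘ e1) = fun p : ℤ × ℤ =>
      jacobiTheta₂_term p.1 (1/2) t3 * jacobiTheta₂_term p.2 (1/2) t1 :=
    funext fun p => term_even p.1 p.2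
  rw [this]
  exact h'

lemma hasSum_odd :
    HasSum (f ∘ (↑) : ↥(Sᶜ) → ℂ)
      ((-(Complex.exp (Real.pi * Complex.I * t3 / 4) * jacobiTheta₂ (t3/2) t3)) *
       (Complex.exp (Real.pi * Complex.I * t1 / 4) * jacobiTheta₂ (t1/2) t1)) := by
  have s3 : Summable fun n : ℤ =>
      ‖-(Complex.exp (Real.pi * Complex.I * t3 / 4) * jacobiTheta₂_term n (t3/2) t3)‖ := by
    simp only [norm_neg, norm_mul]
    exact (norm_summable (t3/2) t3 ht3_im).mul_left _
  have s1 : Summable fun n : ℤ =>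
      ‖Complex.exp (Real.pi * Complex.I * t1 / 4) * jacobiTheta₂_term n (t1/2) t1‖ := by
    simp only [norm_mul]
    exact (norm_summable (t1/2) t1 ht1_im).mul_left _
  have h := (summable_mul_of_summable_norm s3 s1).hasSum
  rw [← tsum_mul_tsum_of_summable_norm s3 s1, tsum_neg, tsum_mul_left, tsum_mul_left] at h
  rw [← Equiv.hasSum_iff e2]
  have : ((f ∘ (↑)) ∘ e2) = fun p : ℤ × ℤ =>
      (-(Complex.exp (Real.pi * Complex.I * t3 / 4) * jacobiTheta₂_term p.1 (t3/2) t3)) *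
      (Complex.exp (Real.pi * Complex.I * t1 / 4) * jacobiTheta₂_term p.2 (t1/2) t1) :=
    funext fun p => term_odd p.1 p.2
  rw [this]
  exact h

end ThetaKAux

namespace ThetaKAux

lemma hinv : (1 : ℂ) / t3 = -t1 := by
  have := ht1t3
  field_simp at this ⊢
  linear_combination -this

lemma FE_A3 : jacobiTheta₂ (1/2) t3 =
    1 / (-Complex.I * t3) ^ (1/2 : ℂ) *
      (Complex.exp (Real.pi * Complex.I * t1 / 4) * jacobiTheta₂ (t1/2) t1) := by
  have h := jacobiTheta₂_functional_equation (1/2) t3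
  rw [ht1t3] at h
  rw [show ((1:ℂ)/2) / t3 = -(t1/2) by rw [div_div, mul_comm, ← div_div, hinv]; ring,
    jacobiTheta₂_neg_left] at h
  rw [show -(Real.pi : ℂ) * Complex.I * (1/2)^2 / t3 =
      (-(Real.pi : ℂ) * Complex.I / 4) * (1/t3) by ring] at h
  rw [hinv] at h
  rw [h]; ring_nf

lemma FE_B3 : Complex.exp (Real.pi * Complex.I * t3 / 4) * jacobiTheta₂ (t3/2) t3 =
    1 / (-Complex.I * t3) ^ (1/2 : ℂ) * jacobiTheta₂ (1/2) t1 := by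
  have h := jacobiTheta₂_functional_equation (t3/2) t3
  rw [ht1t3] at h
  rw [show (t3/2) / t3 = (1:ℂ)/2 by rw [div_div, mul_comm, ← div_div, div_self ht3_ne]] at h
  rw [show -(Real.pi : ℂ) * Complex.I * (t3/2)^2 / t3 = -(Real.pi * Complex.I * t3 / 4) by
    rw [div_eq_iff ht3_ne]; ring] at h
  rw [h]
  rw [show Complex.exp (Real.pi * Complex.I * t3 / 4) *
      (1 / (-Complex.I * t3) ^ (1/2 : ℂ) * Complex.exp (-(Real.pi * Complex.I * t3 / 4)) *
        jacobiTheta₂ (1/2) t1) =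
      1 / (-Complex.I * t3) ^ (1/2 : ℂ) *
        (Complex.exp (Real.pi * Complex.I * t3 / 4) * Complex.exp (-(Real.pi * Complex.I * t3 / 4))) *
        jacobiTheta₂ (1/2) t1 by ring]
  rw [← Complex.exp_add, add_neg_cancel, Complex.exp_zero]
  ring

end ThetaKAux

open ThetaKAux in
/-- `Θ_K((−3 + i√3)/6) = 0`. -/
theorem ThetaK_special_zero :
    ThetaK ((-3 + Complex.I * Real.sqrt 3) / 6) = 0 := by
  have htot := hasSum_even.add_compl hasSum_odd
  have : ThetaK ((-3 + Complex.I * Real.sqrt 3) / 6) = _ := htot.tsum_eq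
  rw [this, FE_A3, FE_B3]
  ring
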